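/- Let m < n be nonnegative integers, 0 = γ₀ < γ₁ < ⋯ < γ_n ≤ 1, and let k_j > 0 for 0 ≤ j ≤ m and k_j < 0 for m < j ≤ n. Define S(s) = Σ_{j=0}^n k_j s^{γ_j} for s ∈ [0,∞). Then there exists a unique s₀ ∈ (0,∞) with S(s₀) = 0; moreover S(s) > 0 for 0 ≤ s < s₀ and S(s) < 0 for s₀ < s < ∞. -/

import Mathlib

open Finset

theorem sum_of_powers_unique_sign_change
    (m n : ℕ) (hmn : m < n)
    (γ k : ℕ → ℝ)
    (hγ0 : γ 0 = 0)
    (hγmono : ∀ j, j < n → γ j < γ (j + 1))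
    (hγn : γ n ≤ 1)
    (hkpos : ∀ j, j ≤ m → 0 < k j)
    (hkneg : ∀ j, m < j → j ≤ n → k j < 0)
    (S : ℝ → ℝ)
    (hS : ∀ s : ℝ, S s = ∑ j ∈ Finset.range (n + 1), k j * s ^ (γ j)) :
    ∃ s₀ : ℝ, 0 < s₀ ∧ S s₀ = 0 ∧
      (∀ s : ℝ, 0 ≤ s → s < s₀ → 0 < S s) ∧
      (∀ s : ℝ, s₀ < s → S s < 0) := by
  -- monotonicity of γ on indices ≤ n
  have hγmono' : ∀ i j : ℕ, i ≤ j → j ≤ n → γ i ≤ γ j := by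
    intro i j hij hjn
    induction j with
    | zero =>
      have : i = 0 := Nat.le_zero.mp hij
      simp [this]
    | succ j ih =>
      rcases Nat.lt_or_ge i (j + 1) with h | h
      · have h1 : γ i ≤ γ j := ih (Nat.lt_succ_iff.mp h) (by omega)
        exact h1.trans (le_of_lt (hγmono j (by omega)))
      · have : i = j + 1 := le_antisymm hij h
        simp [this]
  have hγstrict : ∀ i j : ℕ, i < j → j ≤ n → γ i < γ j := by
    intro i j hij hjn
    have h1 : γ i < γ (i + 1) := hγmono i (by omega)
    exact lt_of_lt_of_le h1 (hγmono' (i + 1) j hij hjn)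
  have hγnonneg : ∀ j, j ≤ n → 0 ≤ γ j := by
    intro j hj
    rw [← hγ0]
    exact hγmono' 0 j (Nat.zero_le j) hj
  have hγpos : ∀ j, 1 ≤ j → j ≤ n → 0 < γ j := by
    intro j h1 hj
    rw [← hγ0]
    exact hγstrict 0 j h1 hj
  have hm1n : m + 1 ≤ n := hmn
  have hγm1 : 0 < γ (m + 1) := hγpos (m + 1) (by omega) hm1n
  -- key lemma: once nonpositive, strictly negative afterwards
  have key : ∀ t s : ℝ, 0 < t → t < s → S t ≤ 0 → S s < 0 := by
    intro t s ht hts hSt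
    have hs : 0 < s := ht.trans hts
    set r := s / t with hr_def
    have hr : 1 < r := (one_lt_div ht).mpr hts
    have hr0 : 0 < r := lt_trans zero_lt_one hr
    set c := γ (m + 1) with hc
    have hrc : 1 < r ^ c :=
      (Real.one_lt_rpow_iff_of_pos hr0).mpr (Or.inl ⟨hr, hγm1⟩)
    have hmain : S s < r ^ c * S t := by
      rw [hS s, hS t, Finset.mul_sum]
      apply Finset.sum_lt_sum
      · intro j hj
        have hjn : j ≤ n := Nat.lt_succ_iff.mp (Finset.mem_range.mp hj)
        have hst : s ^ γ j = t ^ γ j * r ^ γ j := by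
          rw [← Real.mul_rpow ht.le hr0.le]
          congr 1
          rw [hr_def]; field_simp [ht.ne']
        rw [hst]
        rcases le_or_gt j m with hjm | hjm
        · have hk := hkpos j hjm
          have hγle : γ j ≤ c := le_of_lt
            (lt_of_le_of_lt (hγmono' j m hjm (le_of_lt hmn)) (hγmono m hmn))
          have hrle : r ^ γ j ≤ r ^ c := (Real.rpow_le_rpow_left_iff hr).mpr hγle
          have hco : 0 ≤ k j * t ^ γ j :=
            le_of_lt (mul_pos hk (Real.rpow_pos_of_pos ht _))
          calc k j * (t ^ γ j * r ^ γ j) = (k j * t ^ γ j) * r ^ γ j := by ring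
            _ ≤ (k j * t ^ γ j) * r ^ c := mul_le_mul_of_nonneg_left hrle hco
            _ = r ^ c * (k j * t ^ γ j) := by ring
        · have hk := hkneg j hjm hjn
          have hγge : c ≤ γ j := hγmono' (m + 1) j hjm hjn
          have hrge : r ^ c ≤ r ^ γ j := (Real.rpow_le_rpow_left_iff hr).mpr hγge
          have hco : k j * t ^ γ j ≤ 0 :=
            le_of_lt (mul_neg_of_neg_of_pos hk (Real.rpow_pos_of_pos ht _))
          calc k j * (t ^ γ j * r ^ γ j) = (k j * t ^ γ j) * r ^ γ j := by ring
            _ ≤ (k j * t ^ γ j) * r ^ c := mul_le_mul_of_nonpos_left hrge hco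
            _ = r ^ c * (k j * t ^ γ j) := by ring
      · refine ⟨0, Finset.mem_range.mpr (Nat.succ_pos n), ?_⟩
        have hk0 := hkpos 0 (Nat.zero_le m)
        simp only [hγ0, Real.rpow_zero, mul_one]
        nlinarith
    have : r ^ c * S t ≤ 0 :=
      mul_nonpos_of_nonneg_of_nonpos (le_of_lt (lt_trans zero_lt_one hrc)) hSt
    linarith
  -- continuity of S
  have hcont : Continuous S := by
    have hSeq : S = fun s => ∑ j ∈ Finset.range (n + 1), k j * s ^ γ j := funext hS
    rw [hSeq]
    apply continuous_finset_sum
    intro j hj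
    have hjn : j ≤ n := Nat.lt_succ_iff.mp (Finset.mem_range.mp hj)
    exact continuous_const.mul (Real.continuous_rpow_const (hγnonneg j hjn))
  -- value at 0
  have hS0 : S 0 = k 0 := by
    rw [hS, Finset.sum_eq_single 0]
    · rw [hγ0, Real.rpow_zero, mul_one]
    · intro j hj hj0
      have h1 : 1 ≤ j := Nat.one_le_iff_ne_zero.mpr hj0
      have hjn : j ≤ n := Nat.lt_succ_iff.mp (Finset.mem_range.mp hj)
      rw [Real.zero_rpow (ne_of_gt (hγpos j h1 hjn)), mul_zero]
    · intro h
      exact absurd (Finset.mem_range.mpr (Nat.succ_pos n)) h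
  -- a point where S is positive
  have ha : ∃ a : ℝ, 0 < a ∧ 0 < S a := by
    have h0 : 0 < S 0 := by
      rw [hS0]; exact hkpos 0 (Nat.zero_le m)
    have hev : ∀ᶠ x in nhds (0 : ℝ), 0 < S x :=
      hcont.continuousAt.eventually (eventually_gt_nhds h0)
    have hev' : ∀ᶠ x in nhdsWithin (0 : ℝ) (Set.Ioi 0), 0 < S x :=
      hev.filter_mono nhdsWithin_le_nhds
    have hmem : ∀ᶠ x in nhdsWithin (0 : ℝ) (Set.Ioi 0), (0 : ℝ) < x :=
      eventually_mem_nhdsWithin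
    obtain ⟨a, haS, ha0⟩ := (hev'.and hmem).exists
    exact ⟨a, ha0, haS⟩
  -- a point where S is negative
  have hb : ∃ b : ℝ, 0 < b ∧ S b < 0 := by
    set P := ∑ j ∈ Finset.range (m + 1), k j with hPdef
    set N := ∑ j ∈ Finset.Ico (m + 1) (n + 1), k j with hNdef
    have hP : 0 < P := by
      apply Finset.sum_pos
      · intro j hj
        exact hkpos j (Nat.lt_succ_iff.mp (Finset.mem_range.mp hj))
      · exact ⟨0, Finset.mem_range.mpr (Nat.succ_pos m)⟩
    have hN : N < 0 := by
      have : 0 < ∑ j ∈ Finset.Ico (m + 1) (n + 1), (-k j) := by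
        apply Finset.sum_pos
        · intro j hj
          have := Finset.mem_Ico.mp hj
          have hk := hkneg j (by omega) (by omega)
          linarith
        · exact ⟨m + 1, Finset.mem_Ico.mpr ⟨le_refl _, by omega⟩⟩
      rw [Finset.sum_neg_distrib] at this
      linarith
    set δ := γ (m + 1) - γ m with hδdef
    have hδ : 0 < δ := sub_pos.mpr (hγmono m hmn)
    set C := P / (-N) with hCdef
    have hC : 0 < C := div_pos hP (neg_pos.mpr hN)
    set r := (C + 1) ^ (1 / δ) with hrdef
    have hr1 : 1 < r :=
      (Real.one_lt_rpow_iff_of_pos (by linarith)).mpr (Or.inl ⟨by linarith, by positivity⟩)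
    have hr0 : 0 < r := lt_trans zero_lt_one hr1
    have hrδ : r ^ δ = C + 1 := by
      rw [hrdef, ← Real.rpow_mul (by linarith : (0:ℝ) ≤ C + 1)]
      rw [one_div_mul_cancel (ne_of_gt hδ), Real.rpow_one]
    have hsplit : ∑ j ∈ Finset.range (m + 1), (k j * r ^ γ j)
        + ∑ j ∈ Finset.Ico (m + 1) (n + 1), (k j * r ^ γ j)
        = ∑ j ∈ Finset.range (n + 1), k j * r ^ γ j := by
      rw [Finset.range_eq_Ico, Finset.range_eq_Ico]
      exact Finset.sum_Ico_consecutive (fun j => k j * r ^ γ j) (Nat.zero_le _) (by omega : m + 1 ≤ n + 1)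
    have hb1 : ∑ j ∈ Finset.range (m + 1), (k j * r ^ γ j) ≤ r ^ γ m * P := by
      rw [hPdef, Finset.mul_sum]
      apply Finset.sum_le_sum
      intro j hj
      have hjm : j ≤ m := Nat.lt_succ_iff.mp (Finset.mem_range.mp hj)
      have hk := hkpos j hjm
      have hγle : γ j ≤ γ m := hγmono' j m hjm (le_of_lt hmn)
      have hrle : r ^ γ j ≤ r ^ γ m := (Real.rpow_le_rpow_left_iff hr1).mpr hγle
      nlinarith [Real.rpow_pos_of_pos hr0 (γ j)]
    have hb2 : ∑ j ∈ Finset.Ico (m + 1) (n + 1), (k j * r ^ γ j)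
        ≤ r ^ γ (m + 1) * N := by
      rw [hNdef, Finset.mul_sum]
      apply Finset.sum_le_sum
      intro j hj
      have hjmem := Finset.mem_Ico.mp hj
      have hjn : j ≤ n := by omega
      have hk := hkneg j (by omega) hjn
      have hγge : γ (m + 1) ≤ γ j := hγmono' (m + 1) j (by omega) hjn
      have hrge : r ^ γ (m + 1) ≤ r ^ γ j := (Real.rpow_le_rpow_left_iff hr1).mpr hγge
      nlinarith [Real.rpow_pos_of_pos hr0 (γ (m + 1))]
    have hrsum : r ^ γ (m + 1) = r ^ γ m * r ^ δ := by
      rw [hδdef, ← Real.rpow_add hr0]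
      ring_nf
    have hPN : P + (C + 1) * N = N := by
      have hN0 : N ≠ 0 := ne_of_lt hN
      have h : C * N = -P := by
        rw [hCdef, div_neg, neg_mul, div_mul_cancel₀ P hN0]
      linarith [h]
    have hSb : S r < 0 := by
      rw [hS]
      have h1 : (∑ j ∈ Finset.range (n + 1), k j * r ^ γ j)
          ≤ r ^ γ m * P + r ^ γ (m + 1) * N := by
        rw [← hsplit]
        exact add_le_add hb1 hb2
      have h2 : r ^ γ m * P + r ^ γ (m + 1) * N = r ^ γ m * N := by
        rw [hrsum, hrδ]
        calc r ^ γ m * P + r ^ γ m * (C + 1) * N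
            = r ^ γ m * (P + (C + 1) * N) := by ring
          _ = r ^ γ m * N := by rw [hPN]
      have h3 : r ^ γ m * N < 0 :=
        mul_neg_of_pos_of_neg (Real.rpow_pos_of_pos hr0 _) hN
      linarith
    exact ⟨r, hr0, hSb⟩
  obtain ⟨a, ha0, haS⟩ := ha
  obtain ⟨b, hb0, hbS⟩ := hb
  have hab : a < b := by
    by_contra h
    push_neg at h
    rcases eq_or_lt_of_le h with heq | hlt
    · rw [heq] at hbS; linarith
    · have := key b a hb0 hlt (le_of_lt hbS)
      linarith
  have hivt := intermediate_value_Icc' hab.le hcont.continuousOn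
  have h0mem : (0 : ℝ) ∈ Set.Icc (S b) (S a) := ⟨le_of_lt hbS, le_of_lt haS⟩
  obtain ⟨s₀, hs₀mem, hs₀⟩ := hivt h0mem
  have hs₀pos : 0 < s₀ := lt_of_lt_of_le ha0 hs₀mem.1
  refine ⟨s₀, hs₀pos, hs₀, ?_, ?_⟩
  · intro s hs0 hss₀
    rcases eq_or_lt_of_le hs0 with heq | hspos
    · rw [← heq, hS0]; exact hkpos 0 (Nat.zero_le m)
    · by_contra h
      push_neg at h
      have := key s s₀ hspos hss₀ h
      rw [hs₀] at this
      exact lt_irrefl 0 this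
  · intro s hs
    exact key s₀ s hs₀pos hs (le_of_eq hs₀)
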